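/- Suppose σ_0(y) ≤ ζ_0(y) ≤ σ_0(y) + 1 for all y ∈ ℝ^d, and let A_0 = { y : σ_0(y) ∈ ℤ and ζ_0(y) = σ_0(y) + 1 } and A_T = { x : σ_T(x) ∈ ℤ and ζ_T(x) = σ_T(x) + 1 }. Then the complement satisfies A_T^c = { x : ζ_T(x) has a maximizer y with y ∈ A_0^c }. (Lemma 9.1(c), stated pathwise.) -/

import Mathlib

open Set

noncomputable section

private lemma sandwich_eq (a b : WithBot ℤ) (hab : a ≤ b) (hba : b ≤ a + 1)
    (hne : b ≠ a + 1) (ha : a ≠ ⊥) : b = a := by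
  lift a to ℤ using ha
  have hb : b ≠ ⊥ := fun h => by simp [h] at hab
  lift b to ℤ using hb
  have h1 : ((a : WithBot ℤ) + 1) = ((a + 1 : ℤ) : WithBot ℤ) := by push_cast; ring
  rw [h1] at hba hne
  have : b ≤ a := by
    have := lt_of_le_of_ne (by exact_mod_cast hba : b ≤ a + 1) (by exact_mod_cast hne)
    omega
  exact_mod_cast le_antisymm this (by exact_mod_cast hab)

private lemma add_nat_ne_bot (a : WithBot ℤ) (n : ℕ) (ha : a ≠ ⊥) :
    a + (n : WithBot ℤ) ≠ ⊥ := by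
  lift a to ℤ using ha
  exact_mod_cast (by exact_mod_cast WithBot.coe_ne_bot : ((a + n : ℤ) : WithBot ℤ) ≠ ⊥)

/-- `y` is a maximizer for `σT(x) = sup_{y ≤ x} (σ0(y) + T(y,x))`. -/
def IsMaximizer {d : ℕ} (σ0 σT : (Fin d → ℝ) → WithBot ℤ)
    (T : (Fin d → ℝ) → (Fin d → ℝ) → ℕ) (x y : Fin d → ℝ) : Prop :=
  y ≤ x ∧ σT x = σ0 y + (T y x : WithBot ℤ)

/-- `σT` is the (finite-valued) supremum `σT(x) = sup_{y ≤ x} (σ0(y) + T(y,x))`,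
and a maximizer exists whenever `σT(x) > −∞`. -/
def IsSupProcess {d : ℕ} (σ0 σT : (Fin d → ℝ) → WithBot ℤ)
    (T : (Fin d → ℝ) → (Fin d → ℝ) → ℕ) : Prop :=
  (∀ x y : Fin d → ℝ, y ≤ x → σ0 y + (T y x : WithBot ℤ) ≤ σT x) ∧
  (∀ (x : Fin d → ℝ) (b : WithBot ℤ),
      (∀ y : Fin d → ℝ, y ≤ x → σ0 y + (T y x : WithBot ℤ) ≤ b) → σT x ≤ b) ∧
  (∀ x : Fin d → ℝ, σT x ≠ ⊥ → ∃ y : Fin d → ℝ, IsMaximizer σ0 σT T x y)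

theorem coupling_defect_complement
    (d : ℕ) (hd : 1 ≤ d)
    (T : (Fin d → ℝ) → (Fin d → ℝ) → ℕ) (hT : ∀ x, T x x = 0)
    (σ0 σT ζ0 ζT : (Fin d → ℝ) → WithBot ℤ)
    (hσ : IsSupProcess σ0 σT T) (hζ : IsSupProcess ζ0 ζT T)
    (hcoup : ∀ y : Fin d → ℝ, σ0 y ≤ ζ0 y ∧ ζ0 y ≤ σ0 y + (1 : WithBot ℤ)) :
    ∀ x : Fin d → ℝ,
      (¬ (σT x ≠ ⊥ ∧ ζT x = σT x + (1 : WithBot ℤ))) ↔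
      ∃ y : Fin d → ℝ, IsMaximizer ζ0 ζT T x y ∧
        ¬ (σ0 y ≠ ⊥ ∧ ζ0 y = σ0 y + (1 : WithBot ℤ)) := by
  obtain ⟨hσ1, hσ2, hσ3⟩ := hσ
  obtain ⟨hζ1, hζ2, hζ3⟩ := hζ
  -- a point not in A_0 has ζ0 = σ0
  have notA0 : ∀ y : Fin d → ℝ, ¬ (σ0 y ≠ ⊥ ∧ ζ0 y = σ0 y + (1 : WithBot ℤ)) →
      ζ0 y = σ0 y := by
    intro y hy
    by_cases hb : σ0 y = ⊥
    · have h2 := (hcoup y).2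
      rw [hb, WithBot.bot_add] at h2
      rw [hb, le_bot_iff.mp h2]
    · push_neg at hy
      exact sandwich_eq (σ0 y) (ζ0 y) (hcoup y).1 (hcoup y).2 (hy hb) hb
  intro x
  constructor
  · intro hx
    by_cases hb : ζT x = ⊥
    · -- then ζ0 x = ⊥, and x is a maximizer; also σ0 x = ⊥
      have h1 : ζ0 x + (T x x : WithBot ℤ) ≤ ζT x := hζ1 x x le_rfl
      rw [hb, le_bot_iff] at h1
      have hz0 : ζ0 x = ⊥ := by
        by_contra h
        exact add_nat_ne_bot (ζ0 x) (T x x) h h1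
      have hs0 : σ0 x = ⊥ := le_bot_iff.mp (hz0 ▸ (hcoup x).1)
      refine ⟨x, ⟨le_rfl, ?_⟩, fun h => h.1 hs0⟩
      rw [hb, hz0, WithBot.bot_add]
    · obtain ⟨y, hyx, hy⟩ := hζ3 x hb
      by_cases hyA : σ0 y ≠ ⊥ ∧ ζ0 y = σ0 y + (1 : WithBot ℤ)
      · -- y ∈ A_0; then σT x ≠ ⊥, so ζT x ≠ σT x + 1
        have hσb : σT x ≠ ⊥ := fun h => by
          have := hσ1 x y hyx
          rw [h, le_bot_iff] at this
          exact add_nat_ne_bot (σ0 y) (T y x) hyA.1 this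
        have hζne : ζT x ≠ σT x + (1 : WithBot ℤ) := fun h => hx ⟨hσb, h⟩
        -- upper bound ζT x ≤ σT x + 1
        have hub : ζT x ≤ σT x + 1 := by
          refine hζ2 x _ (fun w hw => ?_)
          calc ζ0 w + (T w x : WithBot ℤ)
              ≤ (σ0 w + 1) + (T w x : WithBot ℤ) := add_le_add_left (hcoup w).2 _
            _ = (σ0 w + (T w x : WithBot ℤ)) + 1 := add_right_comm _ _ _
            _ ≤ σT x + 1 := add_le_add_left (hσ1 x w hw) _
        -- lower bound σT x ≤ ζT x
        have hlb : σT x ≤ ζT x := by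
          refine hσ2 x _ (fun w hw => ?_)
          exact le_trans (add_le_add_left (hcoup w).1 _) (hζ1 x w hw)
        obtain ⟨z, hzx, hz⟩ := hσ3 x hσb
        have hzA : ¬ (σ0 z ≠ ⊥ ∧ ζ0 z = σ0 z + (1 : WithBot ℤ)) := by
          intro hzA
          apply hζne
          refine le_antisymm hub ?_
          calc σT x + 1 = (σ0 z + (T z x : WithBot ℤ)) + 1 := by rw [hz]
            _ = (σ0 z + 1) + (T z x : WithBot ℤ) := (add_right_comm _ _ _).symm
            _ = ζ0 z + (T z x : WithBot ℤ) := by rw [hzA.2]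
            _ ≤ ζT x := hζ1 x z hzx
        -- z is a maximizer for ζT x
        have hζσ : ζT x = σT x := sandwich_eq (σT x) (ζT x) hlb hub hζne hσb
        exact ⟨z, ⟨hzx, by rw [hζσ, hz, notA0 z hzA]⟩, hzA⟩
      · exact ⟨y, ⟨hyx, hy⟩, hyA⟩
  · rintro ⟨y, ⟨hyx, hy⟩, hyA⟩ ⟨hσb, hζeq⟩
    have h1 : σT x + 1 ≤ σT x := by
      calc σT x + 1 = ζT x := hζeq.symm
        _ = ζ0 y + (T y x : WithBot ℤ) := hy
        _ = σ0 y + (T y x : WithBot ℤ) := by rw [notA0 y hyA]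
        _ ≤ σT x := hσ1 x y hyx
    lift σT x to ℤ using hσb with n hn
    have : (n : WithBot ℤ) + 1 = ((n + 1 : ℤ) : WithBot ℤ) := by push_cast; ring
    rw [this] at h1
    exact absurd (by exact_mod_cast h1 : n + 1 ≤ n) (by omega)

end
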